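/- Let μ > 0, r ∈ ℝ, β ∈ (0,1). There exists a constant C = C(μ, r, β) > 0 such that for all u ≥ 0: (ln(u+e) + u/(u+e)) · (r·u − μ·u²/(ln(u+e))^{β}) + u·ln(u+e) ≤ (μ/2) · u² · (ln(u+e))^{1−β} + C. -/

import Mathlib

open Real

lemma aux_bound (A c β : ℝ) (hA : 1 ≤ A) (hc : 0 < c) (hβ₁ : β < 1) :
    ∃ C > 0, ∀ u : ℝ, 0 ≤ u →
      A * (u * Real.log (u + Real.exp 1)) ≤
        c * (u ^ 2 * (Real.log (u + Real.exp 1)) ^ (1 - β)) + C := by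
  set M : ℝ := max (Real.exp 1) (8 * A ^ 2 / c ^ 2) with hM
  have hMe : Real.exp 1 ≤ M := le_max_left _ _
  have hM0 : 0 < M := lt_of_lt_of_le (Real.exp_pos 1) hMe
  have hA0 : 0 < A := lt_of_lt_of_le one_pos hA
  refine ⟨A * M * (M + Real.exp 1), by positivity, ?_⟩
  intro u hu
  have hue0 : 0 < u + Real.exp 1 := by positivity
  have hL1 : 1 ≤ Real.log (u + Real.exp 1) :=
    (Real.le_log_iff_exp_le hue0).2 (by linarith)
  set L := Real.log (u + Real.exp 1) with hLdef
  have hL0 : 0 < L := lt_of_lt_of_le one_pos hL1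
  have hpow_pos : 0 < L ^ (1 - β) := Real.rpow_pos_of_pos hL0 _
  rcases le_total u M with h | h
  · have hLle : L ≤ u + Real.exp 1 := by
      have := Real.log_le_sub_one_of_pos hue0
      linarith
    have h1 : u * L ≤ M * (M + Real.exp 1) :=
      mul_le_mul h (by linarith) (le_of_lt hL0) (le_of_lt hM0)
    nlinarith [mul_nonneg (sq_nonneg u) hpow_pos.le,
      mul_le_mul_of_nonneg_left h1 hA0.le]
  · have heu : Real.exp 1 ≤ u := le_trans hMe h
    have hMu2 : 8 * A ^ 2 / c ^ 2 ≤ u := le_trans (le_max_right _ _) h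
    have hsqu := Real.sqrt_nonneg u
    have husq : Real.sqrt u * Real.sqrt u = u := Real.mul_self_sqrt hu
    have hs2 : Real.sqrt 2 * Real.sqrt 2 = 2 := Real.mul_self_sqrt (by norm_num)
    have hs2n : 0 ≤ Real.sqrt 2 := Real.sqrt_nonneg 2
    have hLsqrt : L ≤ 2 * Real.sqrt (u + Real.exp 1) := by
      have h1 : Real.log (Real.sqrt (u + Real.exp 1)) ≤ Real.sqrt (u + Real.exp 1) - 1 :=
        Real.log_le_sub_one_of_pos (Real.sqrt_pos.2 hue0)
      have h2 : Real.log (Real.sqrt (u + Real.exp 1)) = L / 2 := Real.log_sqrt hue0.le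
      linarith
    have hsqsum : Real.sqrt (u + Real.exp 1) ≤ Real.sqrt 2 * Real.sqrt u := by
      rw [← Real.sqrt_mul (by norm_num : (0:ℝ) ≤ 2) u]
      exact Real.sqrt_le_sqrt (by linarith)
    have hsqrtu : 2 * Real.sqrt 2 * A / c ≤ Real.sqrt u := by
      have h8 : (2 * Real.sqrt 2 * A / c) ^ 2 = 8 * A ^ 2 / c ^ 2 := by
        field_simp
        nlinarith [hs2]
      have hle := Real.sqrt_le_sqrt hMu2
      rw [← h8, Real.sqrt_sq (by positivity)] at hle
      exact hle
    have hcs : 2 * Real.sqrt 2 * A ≤ c * Real.sqrt u := by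
      rw [div_le_iff₀ hc] at hsqrtu
      linarith [hsqrtu]
    have hALb : A * L ^ β ≤ c * u := by
      have h1 : L ^ β ≤ L := by
        calc L ^ β ≤ L ^ (1:ℝ) :=
              Real.rpow_le_rpow_of_exponent_le hL1 (le_of_lt hβ₁)
          _ = L := Real.rpow_one L
      have h2 : L ≤ 2 * (Real.sqrt 2 * Real.sqrt u) := by
        calc L ≤ 2 * Real.sqrt (u + Real.exp 1) := hLsqrt
          _ ≤ 2 * (Real.sqrt 2 * Real.sqrt u) := by linarith [hsqsum]
      nlinarith [mul_le_mul_of_nonneg_left h1 hA0.le,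
        mul_le_mul_of_nonneg_left h2 hA0.le,
        mul_le_mul_of_nonneg_right hcs hsqu, husq]
    have hsplit : L ^ β * L ^ (1 - β) = L := by
      rw [← Real.rpow_add hL0]; norm_num
    have heq : A * (u * L) = (A * L ^ β) * (u * L ^ (1 - β)) := by
      conv_lhs => rw [← hsplit]
      ring
    rw [heq]
    have h4 : (A * L ^ β) * (u * L ^ (1 - β)) ≤ (c * u) * (u * L ^ (1 - β)) :=
      mul_le_mul_of_nonneg_right hALb (mul_nonneg hu hpow_pos.le)
    nlinarith [h4, mul_pos (mul_pos hA0 hM0)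
      (by positivity : (0:ℝ) < M + Real.exp 1)]

theorem reaction_term_estimate (μ r β : ℝ) (hμ : 0 < μ) (hβ₀ : 0 < β) (hβ₁ : β < 1) :
    ∃ C > 0, ∀ u : ℝ, 0 ≤ u →
      (Real.log (u + Real.exp 1) + u / (u + Real.exp 1)) *
          (r * u - μ * u ^ 2 / (Real.log (u + Real.exp 1)) ^ β) +
        u * Real.log (u + Real.exp 1) ≤
      (μ / 2) * u ^ 2 * (Real.log (u + Real.exp 1)) ^ (1 - β) + C := by
  have hA : (1:ℝ) ≤ 2 * |r| + 1 := by linarith [abs_nonneg r]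
  have hc : (0:ℝ) < 3 * μ / 2 := by linarith
  obtain ⟨C, hC0, hkey⟩ := aux_bound (2 * |r| + 1) (3 * μ / 2) β hA hc hβ₁
  refine ⟨C, hC0, ?_⟩
  intro u hu
  have hue0 : 0 < u + Real.exp 1 := by positivity
  have hL1 : 1 ≤ Real.log (u + Real.exp 1) :=
    (Real.le_log_iff_exp_le hue0).2 (by linarith)
  set L := Real.log (u + Real.exp 1) with hL
  have hL0 : 0 < L := lt_of_lt_of_le one_pos hL1
  have hq0 : 0 ≤ u / (u + Real.exp 1) := by positivity
  have hq1 : u / (u + Real.exp 1) ≤ 1 := by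
    rw [div_le_one hue0]; linarith [Real.exp_pos 1]
  set q := u / (u + Real.exp 1) with hqdef
  set D := μ * u ^ 2 / L ^ β with hDdef
  have hLβ0 : 0 < L ^ β := Real.rpow_pos_of_pos hL0 β
  have hD0 : 0 ≤ D := by rw [hDdef]; positivity
  have hLD : L * D = μ * (u ^ 2 * L ^ (1 - β)) := by
    rw [hDdef, Real.rpow_sub hL0, Real.rpow_one]
    field_simp
  have h1 : (L + q) * (r * u) ≤ 2 * |r| * (u * L) := by
    have hr : r * u ≤ |r| * u := mul_le_mul_of_nonneg_right (le_abs_self r) hu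
    have hru0 : 0 ≤ |r| * u := mul_nonneg (abs_nonneg r) hu
    calc (L + q) * (r * u) ≤ (L + q) * (|r| * u) :=
          mul_le_mul_of_nonneg_left hr (by linarith)
      _ ≤ (2 * L) * (|r| * u) :=
          mul_le_mul_of_nonneg_right (by linarith) hru0
      _ = 2 * |r| * (u * L) := by ring
  have h2 : L * D ≤ (L + q) * D := mul_le_mul_of_nonneg_right (by linarith) hD0
  have key := hkey u hu
  nlinarith [key, h1, h2, hLD]
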